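/- Let n ≥ 4 be an integer, Λ ∈ ℝ, and let I ⊆ ℝ be a nonempty open interval with 0 ∉ I. A twice differentiable function f : I → ℝ satisfies the ordinary differential equation r · (d/dr)(r·f'(r) + (n−3)·f(r)) = −4Λr²/(n−2) for all r ∈ I if and only if there exist real constants α and M such that f(r) = α − 2M/r^{n−3} − 2Λr²/((n−1)(n−2)) for all r ∈ I. -/

import Mathlib

private lemma const_on_Ioo' {h : ℝ → ℝ} {a b : ℝ} (hd : ∀ x ∈ Set.Ioo a b, HasDerivAt h 0 x)
    {x y : ℝ} (hx : x ∈ Set.Ioo a b) (hy : y ∈ Set.Ioo a b) : h x = h y := by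
  apply (convex_Ioo a b).is_const_of_fderivWithin_eq_zero
    (fun z hz => (hd z hz).differentiableAt.differentiableWithinAt) ?_ hx hy
  intro z hz
  rw [fderivWithin_of_isOpen isOpen_Ioo hz, (hd z hz).hasFDerivAt.fderiv]
  ext t; simp

/-- The generalized Schwarzschild–Tangherlini profile function
`f_{α,M,Λ}(r) = α − 2M/r^{n−3} − 2Λr²/((n−1)(n−2))`. -/
noncomputable def gSTf (n : ℕ) (α M Λ r : ℝ) : ℝ :=
  α - 2 * M / r ^ (n - 3) - 2 * Λ * r ^ 2 / (((n : ℝ) - 1) * ((n : ℝ) - 2))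

/-- a twice differentiable `f` on a nonempty open interval
avoiding `0` satisfies `r·(d/dr)(r·f'(r) + (n−3)f(r)) = −4Λr²/(n−2)` iff it is
a gST profile function `f_{α,M,Λ}` for some constants `α, M`. -/
theorem gST_profile_ode (n : ℕ) (hn : 4 ≤ n) (Λ : ℝ) (a b : ℝ) (hab : a < b)
    (h0 : (0 : ℝ) ∉ Set.Ioo a b) (f : ℝ → ℝ)
    (hf : ∀ r ∈ Set.Ioo a b, DifferentiableAt ℝ f r)
    (hf' : ∀ r ∈ Set.Ioo a b, DifferentiableAt ℝ (deriv f) r) :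
    (∀ r ∈ Set.Ioo a b,
        r * deriv (fun s => s * deriv f s + ((n : ℝ) - 3) * f s) r =
          -4 * Λ * r ^ 2 / ((n : ℝ) - 2)) ↔
      ∃ α M : ℝ, ∀ r ∈ Set.Ioo a b, f r = gSTf n α M Λ r := by
  obtain ⟨m, rfl⟩ : ∃ m, n = m + 4 := ⟨n - 4, by omega⟩
  have e3 : ((m + 4 : ℕ) : ℝ) - 3 = (m : ℝ) + 1 := by push_cast; ring
  have e2 : ((m + 4 : ℕ) : ℝ) - 2 = (m : ℝ) + 2 := by push_cast; ring
  have e1 : ((m + 4 : ℕ) : ℝ) - 1 = (m : ℝ) + 3 := by push_cast; ring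
  have hm1 : (0 : ℝ) < (m : ℝ) + 1 := by positivity
  have hm2 : (0 : ℝ) < (m : ℝ) + 2 := by positivity
  have hm3 : (0 : ℝ) < (m : ℝ) + 3 := by positivity
  have en3 : m + 4 - 3 = m + 1 := by omega
  have hne : ∀ r ∈ Set.Ioo a b, r ≠ 0 := fun r hr h => h0 (h ▸ hr)
  set S := Set.Ioo a b with hS
  have hSopen : IsOpen S := isOpen_Ioo
  constructor
  · intro hode
    -- the midpoint
    have hr0 : (a + b) / 2 ∈ S := ⟨by linarith, by linarith⟩
    set r0 : ℝ := (a + b) / 2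
    -- g and its derivative
    set g : ℝ → ℝ := fun s => s * deriv f s + ((m : ℝ) + 1) * f s with hg
    have hgf : (fun s => s * deriv f s + (((m + 4 : ℕ) : ℝ) - 3) * f s) = g := by
      rw [e3]
    rw [hgf] at hode
    have hgdiff : ∀ r ∈ S, DifferentiableAt ℝ g r := fun r hr =>
      (differentiableAt_id.mul (hf' r hr)).add ((differentiableAt_const _).mul (hf r hr))
    have hgderiv : ∀ r ∈ S, deriv g r = -4 * Λ * r / ((m : ℝ) + 2) := by
      intro r hr
      have h := hode r hr
      rw [e2] at h
      apply mul_left_cancel₀ (hne r hr)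
      rw [h]
      ring
    -- g1 has zero derivative
    set g1 : ℝ → ℝ := fun s => g s + 2 * Λ * s ^ 2 / ((m : ℝ) + 2) with hg1
    have hg1d : ∀ r ∈ S, HasDerivAt g1 0 r := by
      intro r hr
      have h1 : HasDerivAt g (deriv g r) r := (hgdiff r hr).hasDerivAt
      have h2 : HasDerivAt (fun s : ℝ => 2 * Λ * s ^ 2 / ((m : ℝ) + 2))
          (2 * Λ * (2 * r) / ((m : ℝ) + 2)) r := by
        have := ((hasDerivAt_pow 2 r).const_mul (2 * Λ)).div_const ((m : ℝ) + 2)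
        simpa using this
      have := h1.add h2
      rw [hgderiv r hr] at this
      refine this.congr_deriv ?_
      field_simp
      ring
    set C : ℝ := g1 r0 with hC
    have hg1const : ∀ r ∈ S, g r = C - 2 * Λ * r ^ 2 / ((m : ℝ) + 2) := by
      intro r hr
      have h := const_on_Ioo' hg1d hr hr0
      simp only [hg1] at h
      have hCe : C = g r0 + 2 * Λ * r0 ^ 2 / ((m : ℝ) + 2) := rfl
      linarith [h]
    -- p and its derivative
    set p : ℝ → ℝ := fun s => s ^ (m + 1) * f s - C * s ^ (m + 1) / ((m : ℝ) + 1)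
        + 2 * Λ * s ^ (m + 3) / (((m : ℝ) + 2) * ((m : ℝ) + 3)) with hp
    have hpd : ∀ r ∈ S, HasDerivAt p 0 r := by
      intro r hr
      have h1 : HasDerivAt (fun s => s ^ (m + 1) * f s)
          ((↑(m + 1) : ℝ) * r ^ m * f r + r ^ (m + 1) * deriv f r) r := by
        exact ((hasDerivAt_pow (m + 1) r).mul (hf r hr).hasDerivAt).congr_deriv (by simp)
      have h2 : HasDerivAt (fun s : ℝ => C * s ^ (m + 1) / ((m : ℝ) + 1))
          (C * r ^ m) r := by
        have := ((hasDerivAt_pow (m + 1) r).const_mul C).div_const ((m : ℝ) + 1)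
        refine this.congr_deriv ?_
        push_cast
        field_simp
      have h3 : HasDerivAt (fun s : ℝ => 2 * Λ * s ^ (m + 3) / (((m : ℝ) + 2) * ((m : ℝ) + 3)))
          (2 * Λ * (r ^ m * r ^ 2) / ((m : ℝ) + 2)) r := by
        have := ((hasDerivAt_pow (m + 3) r).const_mul (2 * Λ)).div_const
          (((m : ℝ) + 2) * ((m : ℝ) + 3))
        refine this.congr_deriv ?_
        push_cast
        field_simp
        ring
      have := (h1.sub h2).add h3
      refine this.congr_deriv ?_
      have hgr := hg1const r hr
      simp only [hg] at hgr
      have key : r ^ (m + 1) * deriv f r + ((m : ℝ) + 1) * (r ^ m * f r)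
          = r ^ m * (C - 2 * Λ * r ^ 2 / ((m : ℝ) + 2)) := by
        rw [← hgr]; ring
      push_cast
      linear_combination key
    set D : ℝ := p r0 with hD
    refine ⟨C / ((m : ℝ) + 1), -D / 2, ?_⟩
    intro r hr
    have hpr : p r = D := const_on_Ioo' hpd hr hr0
    simp only [hp] at hpr
    have hr0' := hne r hr
    have hrpow : (r : ℝ) ^ (m + 1) ≠ 0 := pow_ne_zero _ hr0'
    simp only [gSTf, en3, e1, e2]
    have hrm3 : r ^ (m + 3) = r ^ (m + 1) * r ^ 2 := by ring
    rw [hrm3] at hpr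
    have hm1' : ((m : ℝ) + 1) ≠ 0 := hm1.ne'
    have hm2' : ((m : ℝ) + 2) ≠ 0 := hm2.ne'
    have hm3' : ((m : ℝ) + 3) ≠ 0 := hm3.ne'
    have hfr : r ^ (m + 1) * f r = D + C * r ^ (m + 1) / ((m : ℝ) + 1)
        - 2 * Λ * (r ^ (m + 1) * r ^ 2) / (((m : ℝ) + 2) * ((m : ℝ) + 3)) := by
      linarith
    apply mul_left_cancel₀ hrpow
    rw [hfr]
    field_simp
    ring
  · rintro ⟨α, M, hfeq⟩ r hr
    have hr0' := hne r hr
    -- explicit derivative of gSTf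
    have hder : ∀ s ∈ S, HasDerivAt f
        (2 * M * ((↑(m + 1) : ℝ) * s ^ m) / (s ^ (m + 1)) ^ 2
          - 2 * Λ * (2 * s) / (((m : ℝ) + 3) * ((m : ℝ) + 2))) s := by
      intro s hs
      have hs0 := hne s hs
      have h1 : HasDerivAt (fun t : ℝ => 2 * M / t ^ (m + 1))
          ((0 * s ^ (m + 1) - 2 * M * ((↑(m + 1) : ℝ) * s ^ m)) / (s ^ (m + 1)) ^ 2) s := by
        exact (hasDerivAt_const s (2 * M)).div (hasDerivAt_pow (m + 1) s) (pow_ne_zero _ hs0)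
      have h2 : HasDerivAt (fun t : ℝ => 2 * Λ * t ^ 2 / (((m : ℝ) + 3) * ((m : ℝ) + 2)))
          (2 * Λ * (2 * s) / (((m : ℝ) + 3) * ((m : ℝ) + 2))) s := by
        simpa using ((hasDerivAt_pow 2 s).const_mul (2 * Λ)).div_const
          (((m : ℝ) + 3) * ((m : ℝ) + 2))
      have h3 : HasDerivAt (fun t : ℝ => gSTf (m + 4) α M Λ t)
          (2 * M * ((↑(m + 1) : ℝ) * s ^ m) / (s ^ (m + 1)) ^ 2
            - 2 * Λ * (2 * s) / (((m : ℝ) + 3) * ((m : ℝ) + 2))) s := by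
        have := ((hasDerivAt_const s α).sub h1).sub h2
        simp only [gSTf, en3, e1, e2]
        refine this.congr_deriv ?_
        ring
      have heq : f =ᶠ[nhds s] fun t => gSTf (m + 4) α M Λ t :=
        Filter.eventuallyEq_of_mem (hSopen.mem_nhds hs) hfeq
      exact h3.congr_of_eventuallyEq heq
    -- the inner function equals K on S
    set K : ℝ → ℝ := fun s => ((m : ℝ) + 1) * α - 2 * Λ * s ^ 2 / ((m : ℝ) + 2) with hK
    have hGK : ∀ s ∈ S, s * deriv f s + (((m + 4 : ℕ) : ℝ) - 3) * f s = K s := by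
      intro s hs
      have hs0 := hne s hs
      rw [(hder s hs).deriv, hfeq s hs, e3]
      simp only [gSTf, en3, e1, e2, hK]
      push_cast
      field_simp
      ring
    have hGKev : (fun s => s * deriv f s + (((m + 4 : ℕ) : ℝ) - 3) * f s) =ᶠ[nhds r] K :=
      Filter.eventuallyEq_of_mem (hSopen.mem_nhds hr) hGK
    rw [hGKev.deriv_eq]
    have hKd : HasDerivAt K (-(2 * Λ * (2 * r) / ((m : ℝ) + 2))) r := by
      have := ((hasDerivAt_pow 2 r).const_mul (2 * Λ)).div_const ((m : ℝ) + 2)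
      exact ((hasDerivAt_const r (((m : ℝ) + 1) * α)).sub this).congr_deriv (by simp)
    rw [hKd.deriv, e2]
    ring
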